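/- For every integer n ≥ 2, the group of C-linear bijections g : B_n → B_n satisfying g(a·b) = g(a)·g(b) and (g(a)|g(b)) = (a|b) for all a, b ∈ B_n consists exactly of the identity map and the map σ. (This is the Griess-algebra form of the statement Aut(A(1/2, c¹_n)) = ⟨σ_e⟩ for n > 1.) -/

import Mathlib

open Matrix

/-- The basis vector `e` (the Ising vector) of the Griess algebra `B_n` of `A(1/2, c¹_n)`. -/
noncomputable def Be : Fin 3 → ℂ := ![1, 0, 0]

/-- The basis vector `f` of the Griess algebra `B_n`. -/
noncomputable def Bf : Fin 3 → ℂ := ![0, 1, 0]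

/-- The basis vector `x` of the Griess algebra `B_n`. -/
noncomputable def Bx : Fin 3 → ℂ := ![0, 0, 1]

/-- The commutative product of the Griess algebra `B_n` of `A(1/2, c¹_n)`, written in
coordinates with respect to the basis `{e, f, x}`: it is determined by
`e·e = 2e`, `f·f = 2f`, `e·f = 0`, `e·x = (1/2)x`, `f·x = (3/2)x`,
`x·x = 2n(n+6)e + 2(n+2)(n+4)f`. -/
noncomputable def Bmul (n : ℕ) (a b : Fin 3 → ℂ) : Fin 3 → ℂ :=
  ![2 * a 0 * b 0 + 2 * (n : ℂ) * ((n : ℂ) + 6) * a 2 * b 2,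
    2 * a 1 * b 1 + 2 * ((n : ℂ) + 2) * ((n : ℂ) + 4) * a 2 * b 2,
    (1 / 2) * (a 0 * b 2 + a 2 * b 0) + (3 / 2) * (a 1 * b 2 + a 2 * b 1)]

/-- The invariant symmetric bilinear form of the Griess algebra `B_n`, determined by
`(e|e) = 1/4`, `(f|f) = (3/4)(1 − 8/((n+2)(n+4)))`, `(x|x) = n(n+6)`,
`(e|f) = (e|x) = (f|x) = 0`. -/
noncomputable def Bform (n : ℕ) (a b : Fin 3 → ℂ) : ℂ :=
  (1 / 4) * a 0 * b 0 + (3 / 4) * (1 - 8 / (((n : ℂ) + 2) * ((n : ℂ) + 4))) * a 1 * b 1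
    + (n : ℂ) * ((n : ℂ) + 6) * a 2 * b 2

/-- The Virasoro vector `u = (1/(2(n+3)))(n e + (n+4) f + x)` of `B_n`. -/
noncomputable def Bu (n : ℕ) : Fin 3 → ℂ :=
  (1 / (2 * ((n : ℂ) + 3))) • ((n : ℂ) • Be + ((n : ℂ) + 4) • Bf + Bx)

/-- The Virasoro vector `v = e + f − u` of `B_n`. -/
noncomputable def Bv (n : ℕ) : Fin 3 → ℂ := Be + Bf - Bu n

/-- The involution `σ` of `B_n`: `σ(e) = e`, `σ(f) = f`, `σ(x) = −x`. -/
noncomputable def Bsigma : (Fin 3 → ℂ) → (Fin 3 → ℂ) := fun a => ![a 0, a 1, -a 2]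

lemma cast_ne (m : ℕ) (h : m ≠ 0) : ((m:ℂ)) ≠ 0 := Nat.cast_ne_zero.mpr h

lemma idem_e (n : ℕ) (hn : 2 ≤ n) (a : Fin 3 → ℂ)
    (hm : Bmul n a a = (2:ℂ) • a) (hf : Bform n a a = 1/4) : a = Be := by
  have ht2 : ((n:ℂ)+2) ≠ 0 := by have := cast_ne (n+2) (by omega); push_cast at this; exact this
  have ht3 : ((n:ℂ)+3) ≠ 0 := by have := cast_ne (n+3) (by omega); push_cast at this; exact this
  have ht4 : ((n:ℂ)+4) ≠ 0 := by have := cast_ne (n+4) (by omega); push_cast at this; exact this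
  have ht6 : ((n:ℂ)+6) ≠ 0 := by have := cast_ne (n+6) (by omega); push_cast at this; exact this
  have ht7 : ((n:ℂ)+7) ≠ 0 := by have := cast_ne (n+7) (by omega); push_cast at this; exact this
  have ht0 : ((n:ℂ)) ≠ 0 := cast_ne n (by omega)
  have ht1 : ((n:ℂ)-1) ≠ 0 := by
    intro h
    have : (n:ℂ) = ((1:ℕ):ℂ) := by push_cast; linear_combination h
    have := Nat.cast_injective (R := ℂ) this
    omega
  have hM : ((n:ℂ)+2)*((n:ℂ)+4) ≠ 0 := mul_ne_zero ht2 ht4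
  have h0 := congrFun hm 0
  have h1 := congrFun hm 1
  have h2 := congrFun hm 2
  simp only [Bmul, Pi.smul_apply, smul_eq_mul, cons_val_zero, cons_val_one, head_cons,
    cons_val_two, tail_cons] at h0 h1 h2
  unfold Bform at hf
  field_simp at hf
  have hf' : ((n:ℂ)+2)*((n:ℂ)+4)*(a 0)^2 + 3*(((n:ℂ)+2)*((n:ℂ)+4)-8)*(a 1)^2
      + 4*((n:ℂ)+2)*((n:ℂ)+4)*(n:ℂ)*((n:ℂ)+6)*(a 2)^2 = ((n:ℂ)+2)*((n:ℂ)+4) := by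
    linear_combination hf
  by_cases ha2 : a 2 = 0
  · rw [ha2] at h0 h1 hf'
    have hq01 : a 1 = 0 ∨ a 1 = 1 := by
      rcases mul_eq_zero.mp (show a 1 * (a 1 - 1) = 0 by linear_combination (1/2) * h1) with h | h
      · exact Or.inl h
      · exact Or.inr (by linear_combination h)
    have hp01 : a 0 = 0 ∨ a 0 = 1 := by
      rcases mul_eq_zero.mp (show a 0 * (a 0 - 1) = 0 by linear_combination (1/2) * h0) with h | h
      · exact Or.inl h
      · exact Or.inr (by linear_combination h)
    rcases hq01 with hq | hq
    · have hp : a 0 = 1 := by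
        rcases hp01 with hp | hp
        · exfalso
          rw [hq, hp] at hf'
          exact hM (by linear_combination -hf')
        · exact hp
      funext i; fin_cases i <;> simp [Be, ha2, hp, hq]
    · exfalso
      rw [hq] at hf'
      rcases hp01 with hp | hp <;> rw [hp] at hf'
      · -- M = 3N : n(n+6) = 4
        have : ((n*(n+6):ℕ):ℂ) = ((4:ℕ):ℂ) := by push_cast; linear_combination (1/2) * hf'
        have h4 := Nat.cast_injective (R := ℂ) this
        nlinarith
      · -- 3N = 0
        have : ((n*(n+6):ℕ):ℂ) = ((0:ℕ):ℂ) := by push_cast; linear_combination (1/3) * hf'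
        have h4 := Nat.cast_injective (R := ℂ) this
        nlinarith
  · exfalso
    have h3' : a 0 + 3 * a 1 = 2 := by
      rcases mul_eq_zero.mp (show a 2 * (a 0 + 3*a 1 - 2) = 0 by linear_combination h2) with h | h
      · exact absurd h ha2
      · linear_combination h
    have hs : 4*((n:ℂ)+3)^2*(a 2)^2 = 1 := by
      linear_combination (9/4)*h1 - (1/4)*h0 + ((a 0 + 1 - 3*a 1)/2) * h3'
    have hq' : 4*((n:ℂ)+3)^2*((a 1)^2 - a 1) + ((n:ℂ)+2)*((n:ℂ)+4) = 0 := by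
      linear_combination 2*((n:ℂ)+3)^2*h1 - ((n:ℂ)+2)*((n:ℂ)+4)*hs
    have H : ((n:ℂ)+3)^2*((n:ℂ)+2)*((n:ℂ)+4)*(a 0)^2 + 3*(n:ℂ)*((n:ℂ)+6)*((n:ℂ)+3)^2*(a 1)^2
        + ((n:ℂ)+2)*((n:ℂ)+4)*(n:ℂ)*((n:ℂ)+6) = ((n:ℂ)+2)*((n:ℂ)+4)*((n:ℂ)+3)^2 := by
      linear_combination ((n:ℂ)+3)^2 * hf' - ((n:ℂ)+2)*((n:ℂ)+4)*(n:ℂ)*((n:ℂ)+6) * hs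
    have h24 : ((n:ℂ)+3)^2 * (((n:ℂ)+2)*((n:ℂ)+4) - 24 * a 1) = 0 := by
      linear_combination H - ((n:ℂ)+3)^2*((n:ℂ)+2)*((n:ℂ)+4)*(a 0 + 2 - 3*a 1) * h3'
        - ((9*((n:ℂ)+2)*((n:ℂ)+4) + 3*(n:ℂ)*((n:ℂ)+6))/4) * hq'
    have h24' : 24 * a 1 = ((n:ℂ)+2)*((n:ℂ)+4) := by
      rcases mul_eq_zero.mp h24 with h | h
      · exact absurd h (pow_ne_zero 2 ht3)
      · linear_combination -h
    have hzero : ((n:ℂ)+2)*((n:ℂ)+4)*((n:ℂ)*((n:ℂ)+6)*((n:ℂ)-1)*((n:ℂ)+7)) = 0 := by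
      linear_combination 144*hq'
        - 24*((n:ℂ)+3)^2*(a 1 + ((n:ℂ)+2)*((n:ℂ)+4)/24 - 1) * h24'
    exact (mul_ne_zero hM (mul_ne_zero (mul_ne_zero (mul_ne_zero ht0 ht6) ht1) ht7)) hzero
lemma idem_f (n : ℕ) (hn : 2 ≤ n) (a : Fin 3 → ℂ)
    (hm : Bmul n a a = (2:ℂ) • a) (hf : Bform n a a = Bform n Bf Bf) : a = Bf := by
  have ht2 : ((n:ℂ)+2) ≠ 0 := by have := cast_ne (n+2) (by omega); push_cast at this; exact this
  have ht3 : ((n:ℂ)+3) ≠ 0 := by have := cast_ne (n+3) (by omega); push_cast at this; exact this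
  have ht4 : ((n:ℂ)+4) ≠ 0 := by have := cast_ne (n+4) (by omega); push_cast at this; exact this
  have ht6 : ((n:ℂ)+6) ≠ 0 := by have := cast_ne (n+6) (by omega); push_cast at this; exact this
  have ht7 : ((n:ℂ)+7) ≠ 0 := by have := cast_ne (n+7) (by omega); push_cast at this; exact this
  have ht0 : ((n:ℂ)) ≠ 0 := cast_ne n (by omega)
  have ht1 : ((n:ℂ)-1) ≠ 0 := by
    intro h
    have : (n:ℂ) = ((1:ℕ):ℂ) := by push_cast; linear_combination h
    have := Nat.cast_injective (R := ℂ) this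
    omega
  have hM : ((n:ℂ)+2)*((n:ℂ)+4) ≠ 0 := mul_ne_zero ht2 ht4
  have h0 := congrFun hm 0
  have h1 := congrFun hm 1
  have h2 := congrFun hm 2
  simp only [Bmul, Pi.smul_apply, smul_eq_mul, cons_val_zero, cons_val_one, head_cons,
    cons_val_two, tail_cons] at h0 h1 h2
  simp only [Bform, Bf, cons_val_zero, cons_val_one, head_cons, cons_val_two, tail_cons] at hf
  field_simp at hf
  have hf' : ((n:ℂ)+2)*((n:ℂ)+4)*(a 0)^2 + 3*(((n:ℂ)+2)*((n:ℂ)+4)-8)*(a 1)^2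
      + 4*((n:ℂ)+2)*((n:ℂ)+4)*(n:ℂ)*((n:ℂ)+6)*(a 2)^2
      = 3*(((n:ℂ)+2)*((n:ℂ)+4)-8) := by
    apply mul_left_cancel₀ (show (16:ℂ)*(((n:ℂ)+2)*((n:ℂ)+4)) ≠ 0 from
      mul_ne_zero (by norm_num) hM)
    linear_combination (16*(((n:ℂ)+2)*((n:ℂ)+4))) * hf
  by_cases ha2 : a 2 = 0
  · rw [ha2] at h0 h1 hf'
    have hq01 : a 1 = 0 ∨ a 1 = 1 := by
      rcases mul_eq_zero.mp (show a 1 * (a 1 - 1) = 0 by linear_combination (1/2) * h1) with h | h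
      · exact Or.inl h
      · exact Or.inr (by linear_combination h)
    have hp01 : a 0 = 0 ∨ a 0 = 1 := by
      rcases mul_eq_zero.mp (show a 0 * (a 0 - 1) = 0 by linear_combination (1/2) * h0) with h | h
      · exact Or.inl h
      · exact Or.inr (by linear_combination h)
    rcases hq01 with hq | hq
    · exfalso
      rw [hq] at hf'
      rcases hp01 with hp | hp <;> rw [hp] at hf'
      · -- 0 = 3N
        have : ((n*(n+6):ℕ):ℂ) = ((0:ℕ):ℂ) := by push_cast; linear_combination (-1/3) * hf'
        have h4 := Nat.cast_injective (R := ℂ) this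
        nlinarith
      · -- M = 3N
        have : ((n*(n+6):ℕ):ℂ) = ((4:ℕ):ℂ) := by push_cast; linear_combination (-1/2) * hf'
        have h4 := Nat.cast_injective (R := ℂ) this
        nlinarith
    · have hp : a 0 = 0 := by
        rw [hq] at hf'
        have hsq : (a 0)^2 = 0 := by
          have := mul_eq_zero.mp (show (((n:ℂ)+2)*((n:ℂ)+4)) * (a 0)^2 = 0 by
            linear_combination hf')
          tauto
        exact pow_eq_zero_iff (by norm_num) |>.mp hsq
      funext i; fin_cases i <;> simp [Bf, ha2, hp, hq]
  · exfalso
    have h3' : a 0 + 3 * a 1 = 2 := by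
      rcases mul_eq_zero.mp (show a 2 * (a 0 + 3*a 1 - 2) = 0 by linear_combination h2) with h | h
      · exact absurd h ha2
      · linear_combination h
    have hs : 4*((n:ℂ)+3)^2*(a 2)^2 = 1 := by
      linear_combination (9/4)*h1 - (1/4)*h0 + ((a 0 + 1 - 3*a 1)/2) * h3'
    have hq' : 4*((n:ℂ)+3)^2*((a 1)^2 - a 1) + ((n:ℂ)+2)*((n:ℂ)+4) = 0 := by
      linear_combination 2*((n:ℂ)+3)^2*h1 - ((n:ℂ)+2)*((n:ℂ)+4)*hs
    have H : ((n:ℂ)+3)^2*((n:ℂ)+2)*((n:ℂ)+4)*(a 0)^2 + 3*(n:ℂ)*((n:ℂ)+6)*((n:ℂ)+3)^2*(a 1)^2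
        + ((n:ℂ)+2)*((n:ℂ)+4)*(n:ℂ)*((n:ℂ)+6)
        = 3*(n:ℂ)*((n:ℂ)+6)*((n:ℂ)+3)^2 := by
      linear_combination ((n:ℂ)+3)^2 * hf' - ((n:ℂ)+2)*((n:ℂ)+4)*(n:ℂ)*((n:ℂ)+6) * hs
    have h24 : ((n:ℂ)+3)^2 * (24 - ((n:ℂ)+2)*((n:ℂ)+4) - 24 * a 1) = 0 := by
      linear_combination H - ((n:ℂ)+3)^2*((n:ℂ)+2)*((n:ℂ)+4)*(a 0 + 2 - 3*a 1) * h3'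
        - ((9*((n:ℂ)+2)*((n:ℂ)+4) + 3*(n:ℂ)*((n:ℂ)+6))/4) * hq'
    have h24' : 24 * a 1 = 24 - ((n:ℂ)+2)*((n:ℂ)+4) := by
      rcases mul_eq_zero.mp h24 with h | h
      · exact absurd h (pow_ne_zero 2 ht3)
      · linear_combination -h
    have hzero : ((n:ℂ)+2)*((n:ℂ)+4)*((n:ℂ)*((n:ℂ)+6)*((n:ℂ)-1)*((n:ℂ)+7)) = 0 := by
      linear_combination 144*hq'
        - 24*((n:ℂ)+3)^2*(a 1 + (24 - ((n:ℂ)+2)*((n:ℂ)+4))/24 - 1) * h24'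
    exact (mul_ne_zero hM (mul_ne_zero (mul_ne_zero (mul_ne_zero ht0 ht6) ht1) ht7)) hzero

lemma hbasis (a : Fin 3 → ℂ) : a = a 0 • Be + a 1 • Bf + a 2 • Bx := by
  funext i; fin_cases i <;>
    simp [Be, Bf, Bx]

lemma mulBeBe (n : ℕ) : Bmul n Be Be = (2:ℂ) • Be := by
  funext i; fin_cases i <;> simp [Bmul, Be] <;> norm_num

lemma mulBfBf (n : ℕ) : Bmul n Bf Bf = (2:ℂ) • Bf := by
  funext i; fin_cases i <;> simp [Bmul, Bf] <;> norm_num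

lemma mulBeBx (n : ℕ) : Bmul n Be Bx = (2⁻¹:ℂ) • Bx := by
  funext i; fin_cases i <;> simp [Bmul, Be, Bx] <;> norm_num

lemma mulBxBx (n : ℕ) :
    Bmul n Bx Bx = (2*(n:ℂ)*((n:ℂ)+6)) • Be + (2*((n:ℂ)+2)*((n:ℂ)+4)) • Bf := by
  funext i; fin_cases i <;> simp [Bmul, Be, Bf, Bx] <;> ring

lemma formBeBe (n : ℕ) : Bform n Be Be = 1/4 := by
  simp [Bform, Be]

lemma sigma_invol : Function.Involutive Bsigma := by
  intro a; funext i; fin_cases i <;> simp [Bsigma]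

theorem stmt_10 (n : ℕ) (hn : 2 ≤ n) :
    {g : (Fin 3 → ℂ) → (Fin 3 → ℂ) |
        IsLinearMap ℂ g ∧ Function.Bijective g ∧
        (∀ a b, g (Bmul n a b) = Bmul n (g a) (g b)) ∧
        (∀ a b, Bform n (g a) (g b) = Bform n a b)}
      = {id, Bsigma} := by
  ext g
  simp only [Set.mem_setOf_eq, Set.mem_insert_iff, Set.mem_singleton_iff]
  constructor
  · rintro ⟨hlin, hbij, hmul, hform⟩
    have hE : g Be = Be := by
      apply idem_e n hn _ _ _
      · calc Bmul n (g Be) (g Be) = g (Bmul n Be Be) := (hmul Be Be).symm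
          _ = g ((2:ℂ) • Be) := by rw [mulBeBe]
          _ = (2:ℂ) • g Be := hlin.map_smul _ _
      · rw [hform Be Be, formBeBe]
    have hF : g Bf = Bf := by
      apply idem_f n hn _ _ _
      · calc Bmul n (g Bf) (g Bf) = g (Bmul n Bf Bf) := (hmul Bf Bf).symm
          _ = g ((2:ℂ) • Bf) := by rw [mulBfBf]
          _ = (2:ℂ) • g Bf := hlin.map_smul _ _
      · exact hform Bf Bf
    have hx : Bmul n Be (g Bx) = (2⁻¹:ℂ) • g Bx := by
      calc Bmul n Be (g Bx) = Bmul n (g Be) (g Bx) := by rw [hE]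
        _ = g (Bmul n Be Bx) := (hmul Be Bx).symm
        _ = g ((2⁻¹:ℂ) • Bx) := by rw [mulBeBx]
        _ = (2⁻¹:ℂ) • g Bx := hlin.map_smul _ _
    have hX0 : g Bx 0 = 0 := by
      have h := congrFun hx 0
      simp only [Bmul, Be, Pi.smul_apply, smul_eq_mul, cons_val_zero, cons_val_one, head_cons,
        cons_val_two, tail_cons] at h
      linear_combination (2/3) * h
    have hX1 : g Bx 1 = 0 := by
      have h := congrFun hx 1
      simp only [Bmul, Be, Pi.smul_apply, smul_eq_mul, cons_val_zero, cons_val_one, head_cons,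
        cons_val_two, tail_cons] at h
      linear_combination (-2) * h
    have hxx : Bmul n (g Bx) (g Bx)
        = (2*(n:ℂ)*((n:ℂ)+6)) • Be + (2*((n:ℂ)+2)*((n:ℂ)+4)) • Bf := by
      calc Bmul n (g Bx) (g Bx) = g (Bmul n Bx Bx) := (hmul Bx Bx).symm
        _ = g ((2*(n:ℂ)*((n:ℂ)+6)) • Be + (2*((n:ℂ)+2)*((n:ℂ)+4)) • Bf) := by rw [mulBxBx]
        _ = _ := by rw [hlin.map_add, hlin.map_smul, hlin.map_smul, hE, hF]
    have hN : (n:ℂ)*((n:ℂ)+6) ≠ 0 :=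
      mul_ne_zero (cast_ne n (by omega))
        (by have := cast_ne (n+6) (by omega); push_cast at this; exact this)
    have hX2 : g Bx 2 = 1 ∨ g Bx 2 = -1 := by
      have h := congrFun hxx 0
      simp only [Bmul, Be, Bf, Pi.add_apply, Pi.smul_apply, smul_eq_mul, cons_val_zero,
        cons_val_one, head_cons, cons_val_two, tail_cons] at h
      have h2 : ((n:ℂ)*((n:ℂ)+6)) * ((g Bx 2 - 1) * (g Bx 2 + 1)) = 0 := by
        linear_combination (1/2) * h - (g Bx 0) * hX0
      rcases mul_eq_zero.mp h2 with h3 | h3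
      · exact absurd h3 hN
      · rcases mul_eq_zero.mp h3 with h4 | h4
        · exact Or.inl (by linear_combination h4)
        · exact Or.inr (by linear_combination h4)
    have hgeq : ∀ a : Fin 3 → ℂ, g a = a 0 • g Be + a 1 • g Bf + a 2 • g Bx := by
      intro a
      conv_lhs => rw [hbasis a]
      rw [hlin.map_add, hlin.map_add, hlin.map_smul, hlin.map_smul, hlin.map_smul]
    rcases hX2 with hX2 | hX2
    · left
      have hX : g Bx = Bx := by
        have h := hbasis (g Bx)
        rw [hX0, hX1, hX2] at h
        simpa using h
      funext a
      rw [hgeq a, hE, hF, hX]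
      exact (hbasis a).symm
    · right
      funext a
      rw [hgeq a, hE, hF]
      funext i
      fin_cases i <;>
        simp [Be, Bf, Bsigma, hX0, hX1, hX2, Pi.add_apply, Pi.smul_apply] <;> try ring
  · rintro (rfl | rfl)
    · exact ⟨⟨fun _ _ => rfl, fun _ _ => rfl⟩, Function.bijective_id,
        fun _ _ => rfl, fun _ _ => rfl⟩
    · refine ⟨⟨fun a b => ?_, fun c a => ?_⟩, sigma_invol.bijective, fun a b => ?_, fun a b => ?_⟩
      · funext i; fin_cases i <;> simp [Bsigma] <;> try ring
      · funext i; fin_cases i <;> simp [Bsigma] <;> try ring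
      · funext i; fin_cases i <;> simp [Bmul, Bsigma] <;> try ring
      · simp only [Bform, Bsigma, cons_val_zero, cons_val_one, head_cons, cons_val_two, tail_cons]
        ring
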